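/- arXiv:1301.6514 — 2 statements merged into one kernel-verified Lean document; each statement's English description precedes it below -/
import Mathlib

section
/- If ξ = c₁·x + c₂·y + c₃ and η = c₄·x + c₅·y + c₆ satisfy the linearized symmetry condition for h(x,y) = y + e^x/y for all x and all y ≠ 0, then c₁ = c₂ = c₄ = c₆ = 0 and c₃ = 2·c₅. -/
open Real

lemma deriv_affine1 (a b c x : ℝ) : deriv (fun t => a * t + b + c) x = a := by
  have : HasDerivAt (fun t => a * t + b + c) (a * 1) x :=
    (((hasDerivAt_id' x).const_mul a).add_const b).add_const c
  simpa using this.deriv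

lemma deriv_affine2 (a b c y : ℝ) : deriv (fun t => a + b * t + c) y = b := by
  have : HasDerivAt (fun t => a + b * t + c) (b * 1) y :=
    ((((hasDerivAt_id' y).const_mul b).const_add a).add_const c)
  simpa using this.deriv

lemma deriv_hx (x y : ℝ) : deriv (fun x' => y + Real.exp x' / y) x = Real.exp x / y := by
  have : HasDerivAt (fun x' => y + Real.exp x' / y) (Real.exp x / y) x :=
    ((Real.hasDerivAt_exp x).div_const y).const_add y
  simpa using this.deriv

lemma deriv_hy (x y : ℝ) (hy : y ≠ 0) :
    deriv (fun y' => y' + Real.exp x / y') y = 1 - Real.exp x / y ^ 2 := by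
  have hdiv : HasDerivAt (fun y' : ℝ => Real.exp x / y')
      ((0 * y - Real.exp x * 1) / y ^ 2) y :=
    (hasDerivAt_const y (Real.exp x)).div (hasDerivAt_id y) hy
  have : HasDerivAt (fun y' => y' + Real.exp x / y')
      (1 + (0 * y - Real.exp x * 1) / y ^ 2) y := (hasDerivAt_id y).add hdiv
  have := this.deriv
  rw [this]; ring

/-- If ξ = c₁x + c₂y + c₃ and η = c₄x + c₅y + c₆ satisfy the linearized symmetry
condition for h(x,y) = y + e^x/y for all x and all y ≠ 0, then
c₁ = c₂ = c₄ = c₆ = 0 and c₃ = 2c₅. -/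
theorem lsc_ansatz_bernoulli (c₁ c₂ c₃ c₄ c₅ c₆ : ℝ)
    (ξ : ℝ → ℝ → ℝ) (η : ℝ → ℝ → ℝ) (h : ℝ → ℝ → ℝ)
    (hξ : ξ = fun x y => c₁ * x + c₂ * y + c₃)
    (hη : η = fun x y => c₄ * x + c₅ * y + c₆)
    (hh : h = fun x y => y + Real.exp x / y)
    (hlsc : ∀ x y : ℝ, y ≠ 0 →
      deriv (fun x' => η x' y) x - deriv (fun y' => ξ x y') y * (h x y) ^ 2
        + (deriv (fun y' => η x y') y - deriv (fun x' => ξ x' y) x) * h x y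
        - (ξ x y * deriv (fun x' => h x' y) x + η x y * deriv (fun y' => h x y') y) = 0) :
    c₁ = 0 ∧ c₂ = 0 ∧ c₄ = 0 ∧ c₆ = 0 ∧ c₃ = 2 * c₅ := by
  subst hξ hη hh
  have key : ∀ y : ℝ, y ≠ 0 →
      c₄ - c₂ * (y + 1 / y) ^ 2 + (c₅ - c₁) * (y + 1 / y)
        - ((c₂ * y + c₃) * (1 / y) + (c₅ * y + c₆) * (1 - 1 / y ^ 2)) = 0 := by
    intro y hy
    have := hlsc 0 y hy
    simp only [deriv_affine1, deriv_affine2, deriv_hx, deriv_hy 0 y hy] at this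
    simp only [Real.exp_zero] at this
    convert this using 2 <;> ring
  have e1 := key 1 one_ne_zero
  have e2 := key (-1) (by norm_num)
  have e3 := key 2 (by norm_num)
  have e4 := key (-2) (by norm_num)
  have e5 := key 3 (by norm_num)
  norm_num at e1 e2 e3 e4 e5
  refine ⟨by linarith, by linarith, by linarith, by linarith, by linarith⟩
end

section
/- If ξ = c₁·x + c₂·y + c₃ and η = c₄·x + c₅·y + c₆ satisfy the linearized symmetry condition for h(x,y) = y/(x−y) for all (x,y) with x ≠ y and y ≠ 0, then c₃ = c₄ = c₆ = 0 and c₁ = c₅. -/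
open Real

lemma affine_deriv (a b : ℝ) (x : ℝ) : deriv (fun t : ℝ => a * t + b) x = a := by
  have : HasDerivAt (fun t : ℝ => a * t + b) a x := by
    simpa using ((hasDerivAt_id x).const_mul a).add_const b
  exact this.deriv

lemma hx_deriv (x y : ℝ) (hxy : x ≠ y) :
    deriv (fun x' => y / (x' - y)) x = -y / (x - y) ^ 2 := by
  have h1 : HasDerivAt (fun x' : ℝ => x' - y) 1 x := by
    simpa using (hasDerivAt_id x).sub_const y
  have h2 := (hasDerivAt_const x y).div h1 (sub_ne_zero.2 hxy)
  have : HasDerivAt (fun x' => y / (x' - y)) (-y / (x - y) ^ 2) x := by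
    exact h2.congr_deriv (by ring)
  exact this.deriv

lemma hy_deriv (x y : ℝ) (hxy : x ≠ y) :
    deriv (fun y' => y' / (x - y')) y = x / (x - y) ^ 2 := by
  have h1 : HasDerivAt (fun y' : ℝ => x - y') (-1) y := by
    simpa using (hasDerivAt_id' y).const_sub x
  have hne : x - y ≠ 0 := sub_ne_zero.2 hxy
  have h2 := (hasDerivAt_id y).div h1 hne
  have : HasDerivAt (fun y' => y' / (x - y')) (x / (x - y) ^ 2) y := by
    exact h2.congr_deriv (by simp only [id]; ring)
  exact this.deriv

/-- If ξ = c₁x + c₂y + c₃ and η = c₄x + c₅y + c₆ satisfy the linearized symmetry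
condition for h(x,y) = y/(x−y) for all (x,y) with x ≠ y and y ≠ 0, then
c₃ = c₄ = c₆ = 0 and c₁ = c₅. -/
theorem lsc_ansatz_y_over_x_minus_y (c₁ c₂ c₃ c₄ c₅ c₆ : ℝ)
    (ξ : ℝ → ℝ → ℝ) (η : ℝ → ℝ → ℝ) (h : ℝ → ℝ → ℝ)
    (hξ : ξ = fun x y => c₁ * x + c₂ * y + c₃)
    (hη : η = fun x y => c₄ * x + c₅ * y + c₆)
    (hh : h = fun x y => y / (x - y))
    (hlsc : ∀ x y : ℝ, x ≠ y → y ≠ 0 →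
      deriv (fun x' => η x' y) x - deriv (fun y' => ξ x y') y * (h x y) ^ 2
        + (deriv (fun y' => η x y') y - deriv (fun x' => ξ x' y) x) * h x y
        - (ξ x y * deriv (fun x' => h x' y) x + η x y * deriv (fun y' => h x y') y) = 0) :
    c₃ = 0 ∧ c₄ = 0 ∧ c₆ = 0 ∧ c₁ = c₅ := by
  subst hξ hη hh
  have key : ∀ x y : ℝ, x ≠ y → y ≠ 0 →
      -2 * c₄ * (x * y) + (c₄ + c₁ - c₅) * y ^ 2 + c₃ * y - c₆ * x = 0 := by
    intro x y hxy hy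
    have H := hlsc x y hxy hy
    simp only at H
    rw [show (fun x' => c₄ * x' + c₅ * y + c₆) = (fun x' => c₄ * x' + (c₅ * y + c₆)) by
        funext t; ring] at H
    rw [show (fun y' => c₁ * x + c₂ * y' + c₃) = (fun y' => c₂ * y' + (c₁ * x + c₃)) by
        funext t; ring] at H
    rw [show (fun y' => c₄ * x + c₅ * y' + c₆) = (fun y' => c₅ * y' + (c₄ * x + c₆)) by
        funext t; ring] at H
    rw [show (fun x' => c₁ * x' + c₂ * y + c₃) = (fun x' => c₁ * x' + (c₂ * y + c₃)) by
        funext t; ring] at H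
    rw [affine_deriv, affine_deriv, affine_deriv, affine_deriv,
        hx_deriv x y hxy, hy_deriv x y hxy] at H
    have hne : x - y ≠ 0 := sub_ne_zero.2 hxy
    field_simp at H
    have H2 : (-2 * c₄ * (x * y) + (c₄ + c₁ - c₅) * y ^ 2 + c₃ * y - c₆ * x) * (x - y) ^ 5 = 0 := by
      linear_combination (x - y) ^ 5 * H
    rcases mul_eq_zero.1 H2 with h' | h'
    · exact h'
    · exact absurd (pow_eq_zero_iff (by norm_num) |>.1 h') hne
  have e1 := key 2 1 (by norm_num) (by norm_num)
  have e2 := key 3 1 (by norm_num) (by norm_num)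
  have e3 := key 2 (-1) (by norm_num) (by norm_num)
  have e4 := key 1 (-1) (by norm_num) (by norm_num)
  norm_num at e1 e2 e3 e4
  refine ⟨by linarith, by linarith, by linarith, by linarith⟩
end
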